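/- Let A, A' be affine spaces of order two (over GF(2)) with dim A' ≥ 3, and let φ : L → L' be a bijection of line sets taking meeting lines to meeting lines. Then the induced injective point map λ (defined by a ∩ b ↦ φ(a) ∩ φ(b) for adjacent lines) is surjective, hence a collineation. -/

import Mathlib

variable (k V P : Type*) [DivisionRing k] [AddCommGroup V] [Module k V] [AddTorsor V P]

/-- A subset of the affine space `P` is a line iff it is of the form `{t • v +ᵥ p | t : k}`
with `v ≠ 0`. -/
def IsPLine (s : Set P) : Prop :=
  ∃ (p : P) (v : V), v ≠ 0 ∧ s = {q | ∃ t : k, q = t • v +ᵥ p}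

/-- The set of all lines of the affine space `P`. -/
abbrev PLine : Type _ := {s : Set P // IsPLine k V P s}

/-- Two lines are related iff they have a common point. -/
def PMeets (a b : PLine k V P) : Prop := (a.1 ∩ b.1).Nonempty

section Aux

variable {W X : Type*} [AddCommGroup W] [Module (ZMod 2) W] [AddTorsor W X]

lemma isPLine_iff {s : Set X} : IsPLine (ZMod 2) W X s ↔ ∃ p q : X, p ≠ q ∧ s = {p, q} := by
  constructor
  · rintro ⟨p, v, hv, rfl⟩
    refine ⟨p, v +ᵥ p, fun h => hv ?_, ?_⟩
    · have : v +ᵥ p = (0 : W) +ᵥ p := by rw [zero_vadd]; exact h.symm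
      exact vadd_right_cancel p this
    · ext q
      simp only [Set.mem_setOf_eq, Set.mem_insert_iff, Set.mem_singleton_iff]
      constructor
      · rintro ⟨t, rfl⟩
        have : t = 0 ∨ t = 1 := by revert t; decide
        rcases this with rfl | rfl
        · left; rw [zero_smul, zero_vadd]
        · right; rw [one_smul]
      · rintro (rfl | rfl)
        · exact ⟨0, by rw [zero_smul, zero_vadd]⟩
        · exact ⟨1, by rw [one_smul]⟩
  · rintro ⟨p, q, hpq, rfl⟩
    refine ⟨p, q -ᵥ p, vsub_ne_zero.2 hpq.symm, ?_⟩
    ext x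
    simp only [Set.mem_insert_iff, Set.mem_singleton_iff, Set.mem_setOf_eq]
    constructor
    · rintro (rfl | rfl)
      · exact ⟨0, by rw [zero_smul, zero_vadd]⟩
      · exact ⟨1, by rw [one_smul, vsub_vadd]⟩
    · rintro ⟨t, rfl⟩
      have : t = 0 ∨ t = 1 := by revert t; decide
      rcases this with rfl | rfl
      · left; rw [zero_smul, zero_vadd]
      · right; rw [one_smul, vsub_vadd]

def lineMk (p q : X) (h : p ≠ q) : PLine (ZMod 2) W X :=
  ⟨{p, q}, isPLine_iff.mpr ⟨p, q, h, rfl⟩⟩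

lemma line_pair (a : PLine (ZMod 2) W X) : ∃ p q : X, p ≠ q ∧ a.1 = {p, q} :=
  isPLine_iff.mp a.2

end Aux

section Pairs

variable {α : Type*}

def IsPair (s : Set α) : Prop := ∃ p q : α, p ≠ q ∧ s = {p, q}

lemma pair_eq_of_mem {x y p q : α} (hxy : x ≠ y) (hx : x ∈ ({p, q} : Set α))
    (hy : y ∈ ({p, q} : Set α)) : ({p, q} : Set α) = {x, y} := by
  rcases hx with rfl | hx <;> rcases hy with rfl | hy <;>
    simp_all [Set.pair_comm]

lemma pair_eq_of_mem' {s : Set α} (hs : IsPair s) {x y : α} (hxy : x ≠ y)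
    (hx : x ∈ s) (hy : y ∈ s) : s = {x, y} := by
  obtain ⟨p, q, hpq, rfl⟩ := hs
  exact pair_eq_of_mem hxy hx hy

lemma exists_other {s : Set α} (hs : IsPair s) {b : α} (hb : b ∈ s) :
    ∃ c, c ≠ b ∧ s = {b, c} := by
  obtain ⟨p, q, hpq, rfl⟩ := hs
  rcases hb with rfl | hb
  · exact ⟨q, hpq.symm, rfl⟩
  · rcases hb with rfl
    exact ⟨p, hpq, Set.pair_comm p b⟩

lemma not_three_mem {s : Set α} (hs : IsPair s) {x y z : α} (hxy : x ≠ y) (hxz : x ≠ z)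
    (hyz : y ≠ z) (hx : x ∈ s) (hy : y ∈ s) (hz : z ∈ s) : False := by
  have := pair_eq_of_mem' hs hxy hx hy
  rw [this] at hz
  rcases hz with rfl | rfl
  · exact hxz rfl
  · exact hyz rfl

end Pairs

section Comb

variable {α : Type*}

lemma mixed {e0 e1 e2 e3 : Set α} (h1 : IsPair e1) (h2 : IsPair e2) (h3 : IsPair e3)
    {a b : α} (hab : a ≠ b) (he0 : e0 = {a, b}) (h10 : e1 ≠ e0) (h20 : e2 ≠ e0)
    (h12 : e1 ≠ e2) (h30 : e3 ≠ e0) (ha1 : a ∈ e1) (ha2 : a ∈ e2) (hb3 : b ∈ e3)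
    (m13 : (e1 ∩ e3).Nonempty) (m23 : (e2 ∩ e3).Nonempty) : False := by
  obtain ⟨c, hcb, he3⟩ := exists_other h3 hb3
  -- first: c ≠ a, else e3 = {a,b} = e0
  have hca : c ≠ a := by
    rintro rfl
    exact h30 (by rw [he3, he0, Set.pair_comm])
  obtain ⟨y, hy1, hy3⟩ := m13
  obtain ⟨z, hz2, hz3⟩ := m23
  rw [he3] at hy3 hz3
  have hc1 : c ∈ e1 := by
    rcases hy3 with rfl | rfl
    · exact absurd (pair_eq_of_mem' h1 hab ha1 hy1 ▸ he0 ▸ rfl : e1 = e0) h10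
    · exact hy1
  have hc2 : c ∈ e2 := by
    rcases hz3 with rfl | rfl
    · exact absurd (pair_eq_of_mem' h2 hab ha2 hz2 ▸ he0 ▸ rfl : e2 = e0) h20
    · exact hz2
  have : e1 = e2 := by
    rw [pair_eq_of_mem' h1 hca.symm ha1 hc1, pair_eq_of_mem' h2 hca.symm ha2 hc2]
  exact h12 this

lemma four_common {e : Fin 4 → Set α} (hp : ∀ i, IsPair (e i))
    (hd : ∀ i j, i ≠ j → e i ≠ e j) (hm : ∀ i j, (e i ∩ e j).Nonempty) :
    ∃ x, ∀ i, x ∈ e i := by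
  obtain ⟨a, b, hab, he0⟩ := hp 0
  have h0a : a ∈ e 0 := by rw [he0]; exact Set.mem_insert _ _
  have h0b : b ∈ e 0 := by rw [he0]; exact Set.mem_insert_iff.2 (Or.inr rfl)
  have he0' : e 0 = {b, a} := he0.trans (Set.pair_comm a b)
  have key : ∀ i, a ∈ e i ∨ b ∈ e i := by
    intro i
    obtain ⟨x, hx, hx'⟩ := hm i 0
    rw [he0] at hx'
    rcases hx' with h | h
    · exact Or.inl (h ▸ hx)
    · exact Or.inr (h ▸ hx)
  rcases key 1 with h1 | h1 <;> rcases key 2 with h2 | h2 <;> rcases key 3 with h3 | h3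
  · refine ⟨a, fun i => ?_⟩; fin_cases i <;> assumption
  · exact absurd (mixed (hp 1) (hp 2) (hp 3) hab he0 (hd 1 0 (by decide))
      (hd 2 0 (by decide)) (hd 1 2 (by decide)) (hd 3 0 (by decide)) h1 h2 h3
      (hm 1 3) (hm 2 3)) id
  · exact absurd (mixed (hp 1) (hp 3) (hp 2) hab he0 (hd 1 0 (by decide))
      (hd 3 0 (by decide)) (hd 1 3 (by decide)) (hd 2 0 (by decide)) h1 h3 h2
      (hm 1 2) (hm 3 2)) id
  · exact absurd (mixed (hp 2) (hp 3) (hp 1) hab.symm he0' (hd 2 0 (by decide))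
      (hd 3 0 (by decide)) (hd 2 3 (by decide)) (hd 1 0 (by decide)) h2 h3 h1
      (hm 2 1) (hm 3 1)) id
  · exact absurd (mixed (hp 2) (hp 3) (hp 1) hab he0 (hd 2 0 (by decide))
      (hd 3 0 (by decide)) (hd 2 3 (by decide)) (hd 1 0 (by decide)) h2 h3 h1
      (hm 2 1) (hm 3 1)) id
  · exact absurd (mixed (hp 1) (hp 3) (hp 2) hab.symm he0' (hd 1 0 (by decide))
      (hd 3 0 (by decide)) (hd 1 3 (by decide)) (hd 2 0 (by decide)) h1 h3 h2
      (hm 1 2) (hm 3 2)) id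
  · exact absurd (mixed (hp 1) (hp 2) (hp 3) hab.symm he0' (hd 1 0 (by decide))
      (hd 2 0 (by decide)) (hd 1 2 (by decide)) (hd 3 0 (by decide)) h1 h2 h3
      (hm 1 3) (hm 2 3)) id
  · refine ⟨b, fun i => ?_⟩; fin_cases i <;> assumption

lemma ext_line {e1 e2 e3 f : Set α} (hp1 : IsPair e1) (hp2 : IsPair e2) (hp3 : IsPair e3)
    (hpf : IsPair f) (h12 : e1 ≠ e2) (h13 : e1 ≠ e3) (h23 : e2 ≠ e3) {x : α}
    (hx1 : x ∈ e1) (hx2 : x ∈ e2) (hx3 : x ∈ e3) (m1 : (f ∩ e1).Nonempty)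
    (m2 : (f ∩ e2).Nonempty) (m3 : (f ∩ e3).Nonempty) : x ∈ f := by
  by_contra hxf
  obtain ⟨y1, hy1, he1⟩ := exists_other hp1 hx1
  obtain ⟨y2, hy2, he2⟩ := exists_other hp2 hx2
  obtain ⟨y3, hy3, he3⟩ := exists_other hp3 hx3
  have h12' : y1 ≠ y2 := by rintro rfl; exact h12 (he1.trans he2.symm)
  have h13' : y1 ≠ y3 := by rintro rfl; exact h13 (he1.trans he3.symm)
  have h23' : y2 ≠ y3 := by rintro rfl; exact h23 (he2.trans he3.symm)
  have key : ∀ (g : Set α) (y : α), g = {x, y} → (f ∩ g).Nonempty → y ∈ f := by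
    intro g y hg ⟨z, hz, hz'⟩
    rw [hg] at hz'
    rcases hz' with h | h
    · exact absurd (h ▸ hz) hxf
    · exact h ▸ hz
  exact not_three_mem hpf h12' h13' h23' (key e1 y1 he1 m1) (key e2 y2 he2 m2)
    (key e3 y3 he3 m3)

end Comb

section More

variable {W X : Type*} [AddCommGroup W] [Module (ZMod 2) W] [AddTorsor W X]

lemma collinear_z2 (Q R S : X) :
    Collinear (ZMod 2) ({Q, R, S} : Set X) ↔ Q = R ∨ Q = S ∨ R = S := by
  constructor
  · intro h
    rw [collinear_iff_of_mem (Set.mem_insert Q {R, S})] at h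
    obtain ⟨v, hv⟩ := h
    obtain ⟨r, hr⟩ := hv R (by simp)
    obtain ⟨s, hs⟩ := hv S (by simp)
    have hq : Q = (0 : ZMod 2) • v +ᵥ Q := by rw [zero_smul, zero_vadd]
    have tri : ∀ c d : ZMod 2, c = d ∨ c ≠ d := fun c d => em _
    have key : ((0 : ZMod 2) = r ∨ (0 : ZMod 2) = s ∨ r = s) := by
      rcases tri 0 r with h1 | h1
      · exact Or.inl h1
      rcases tri 0 s with h2 | h2
      · exact Or.inr (Or.inl h2)
      have : ∀ r s : ZMod 2, (0 : ZMod 2) ≠ r → (0 : ZMod 2) ≠ s → r = s := by decide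
      exact Or.inr (Or.inr (this r s h1 h2))
    rcases key with h1 | h1 | h1
    · exact Or.inl (by rw [hr, ← h1, zero_smul, zero_vadd])
    · exact Or.inr (Or.inl (by rw [hs, ← h1, zero_smul, zero_vadd]))
    · exact Or.inr (Or.inr (by rw [hr, hs, h1]))
  · rintro (rfl | rfl | rfl)
    · have : ({Q, Q, S} : Set X) = {Q, S} := by simp
      rw [this]; exact collinear_pair _ _ _
    · have : ({Q, R, Q} : Set X) = {Q, R} := by
        ext x; simp [or_comm, or_assoc, or_left_comm]
      rw [this]; exact collinear_pair _ _ _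
    · have : ({Q, R, R} : Set X) = {Q, R} := by simp
      rw [this]; exact collinear_pair _ _ _

lemma exists_li_fin3 (h : 3 ≤ Module.rank (ZMod 2) W) :
    ∃ v : Fin 3 → W, LinearIndependent (ZMod 2) v := by
  have h' : ((3 : ℕ) : Cardinal) ≤ Module.rank (ZMod 2) W := by exact_mod_cast h
  obtain ⟨s, hs, hli⟩ := le_rank_iff_exists_linearIndependent_finset.mp h'
  have e : Fin 3 ≃ (s : Set W) := (Finset.equivFinOfCardEq hs).symm.trans (Equiv.refl _)
  exact ⟨(↑) ∘ e, hli.comp e e.injective⟩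

end More

section MoreAux

variable {W X : Type*} [AddCommGroup W] [Module (ZMod 2) W] [AddTorsor W X]

lemma isPair_line (a : PLine (ZMod 2) W X) : IsPair a.1 := line_pair a

lemma mem_lineMk_left (p q : X) (h : p ≠ q) : p ∈ (lineMk p q h : PLine (ZMod 2) W X).1 :=
  Set.mem_insert _ _

lemma mem_lineMk_right (p q : X) (h : p ≠ q) : q ∈ (lineMk p q h : PLine (ZMod 2) W X).1 :=
  Set.mem_insert_iff.2 (Or.inr rfl)

end MoreAux

variable (V' P' : Type*) [AddCommGroup V'] [Module (ZMod 2) V'] [AddTorsor V' P']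

/-- For affine spaces of order two with `dim A' ≥ 3` and a bijection `φ` of the line sets
taking meeting lines to meeting lines, the induced injective point map `λ` is surjective,
hence a collineation. -/
theorem stmt19 {V P : Type*} [AddCommGroup V] [Module (ZMod 2) V] [AddTorsor V P]
    (hdim' : 3 ≤ Module.rank (ZMod 2) V')
    (φ : PLine (ZMod 2) V P ≃ PLine (ZMod 2) V' P')
    (hmono : ∀ a b : PLine (ZMod 2) V P,
      PMeets (ZMod 2) V P a b → PMeets (ZMod 2) V' P' (φ a) (φ b)) :
    ∃ lam : P → P',
      Function.Bijective lam ∧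
      (∀ a b : PLine (ZMod 2) V P, a ≠ b → ∀ Q : P, Q ∈ a.1 ∩ b.1 →
        lam Q ∈ (φ a).1 ∩ (φ b).1) ∧
      (∀ Q R S : P,
        Collinear (ZMod 2) ({Q, R, S} : Set P) ↔
          Collinear (ZMod 2) ({lam Q, lam R, lam S} : Set P')) := by
  classical
  obtain ⟨v', hv'⟩ := exists_li_fin3 hdim'
  have hv0 : v' 0 ≠ 0 := hv'.ne_zero 0
  have hv01 : v' 0 ≠ v' 1 := fun h => (by decide : (0 : Fin 3) ≠ 1) (hv'.injective h)
  by_cases h5 : ∃ f : Fin 5 → P, Function.Injective f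
  · obtain ⟨f, hf⟩ := h5
    -- four distinct points different from any given point
    have hfour : ∀ Q : P, ∃ g : Fin 4 → P, Function.Injective g ∧ ∀ i, g i ≠ Q := by
      intro Q
      by_cases hq : ∃ j, f j = Q
      · obtain ⟨j, rfl⟩ := hq
        exact ⟨fun i => f (j.succAbove i), hf.comp (Fin.succAbove_right_injective),
          fun i h => Fin.succAbove_ne j i (hf h)⟩
      · push_neg at hq
        exact ⟨fun i => f i.castSucc, hf.comp (Fin.castSucc_injective 4),
          fun i => hq _⟩
    -- the common point of the image of the star at Q
    have hcom : ∀ Q : P, ∃ x : P', ∀ a : PLine (ZMod 2) V P, Q ∈ a.1 → x ∈ (φ a).1 := by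
      intro Q
      obtain ⟨g, hg, hgQ⟩ := hfour Q
      set L : Fin 4 → PLine (ZMod 2) V P :=
        fun i => lineMk Q (g i) (fun h => hgQ i h.symm) with hL
      have hLQ : ∀ i, Q ∈ (L i).1 := fun i => mem_lineMk_left _ _ _
      have hLg : ∀ i, g i ∈ (L i).1 := fun i => mem_lineMk_right _ _ _
      have hLinj : ∀ i j, i ≠ j → L i ≠ L j := by
        intro i j hij h
        have : g i ∈ ({Q, g j} : Set P) := by
          have := congrArg Subtype.val h
          rw [hL] at this
          simp only [lineMk] at this
          rw [← this]
          exact Or.inr rfl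
        rcases this with h' | h'
        · exact hgQ i h'
        · exact hij (hg h')
      have hphi_d : ∀ i j, i ≠ j → (φ (L i)).1 ≠ (φ (L j)).1 := fun i j hij h =>
        hLinj i j hij (φ.injective (Subtype.ext h))
      have hm : ∀ i j, ((φ (L i)).1 ∩ (φ (L j)).1).Nonempty := fun i j =>
        hmono _ _ ⟨Q, hLQ i, hLQ j⟩
      obtain ⟨x, hx⟩ := four_common (e := fun i => (φ (L i)).1)
        (fun i => isPair_line _) hphi_d hm
      refine ⟨x, fun a ha => ?_⟩
      exact ext_line (isPair_line (φ (L 0))) (isPair_line (φ (L 1)))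
        (isPair_line (φ (L 2))) (isPair_line (φ a))
        (hphi_d 0 1 (by decide)) (hphi_d 0 2 (by decide)) (hphi_d 1 2 (by decide))
        (hx 0) (hx 1) (hx 2)
        (hmono a (L 0) ⟨Q, ha, hLQ 0⟩) (hmono a (L 1) ⟨Q, ha, hLQ 1⟩)
        (hmono a (L 2) ⟨Q, ha, hLQ 2⟩)
    set lam : P → P' := fun Q => (hcom Q).choose with hlamdef
    have hlam : ∀ Q (a : PLine (ZMod 2) V P), Q ∈ a.1 → lam Q ∈ (φ a).1 :=
      fun Q => (hcom Q).choose_spec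
    -- injectivity
    have hinj : Function.Injective lam := by
      intro Q R hQR
      by_contra hne
      have hexS : ∃ S : P, S ≠ Q ∧ S ≠ R ∧ lam S ≠ lam Q := by
        by_contra hS
        push_neg at hS
        have hall : ∀ a : PLine (ZMod 2) V P, lam Q ∈ (φ a).1 := by
          intro a
          obtain ⟨p, q, hpq, hpa⟩ := line_pair a
          have hpmem : p ∈ a.1 := by rw [hpa]; exact Set.mem_insert _ _
          by_cases h1 : p = Q
          · subst h1; exact hlam p a hpmem
          by_cases h2 : p = R
          · subst h2; rw [hQR]; exact hlam p a hpmem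
          · rw [← hS p h1 h2]; exact hlam p a hpmem
        set y : P' := v' 0 +ᵥ lam Q with hy
        set z : P' := v' 1 +ᵥ lam Q with hz
        have hyx : y ≠ lam Q := by
          intro h
          apply hv0
          have : v' 0 +ᵥ lam Q = (0 : V') +ᵥ lam Q := by rw [zero_vadd]; exact h
          exact vadd_right_cancel _ this
        have hzx : z ≠ lam Q := by
          intro h
          apply hv'.ne_zero 1
          have : v' 1 +ᵥ lam Q = (0 : V') +ᵥ lam Q := by rw [zero_vadd]; exact h
          exact vadd_right_cancel _ this
        have hyz : y ≠ z := fun h => hv01 (vadd_right_cancel _ h)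
        have hmem := hall (φ.symm (lineMk y z hyz))
        rw [Equiv.apply_symm_apply] at hmem
        rcases hmem with h | h
        · exact hyx h.symm
        · exact hzx h.symm
      obtain ⟨S, hSQ, hSR, hSx⟩ := hexS
      set c1 : PLine (ZMod 2) V P := lineMk Q S (Ne.symm hSQ) with hc1def
      set c2 : PLine (ZMod 2) V P := lineMk R S (Ne.symm hSR) with hc2def
      have hc12 : c1 ≠ c2 := by
        intro h
        have h' := congrArg Subtype.val h
        rw [hc1def, hc2def] at h'
        simp only [lineMk] at h'
        have : Q ∈ ({R, S} : Set P) := by rw [← h']; exact Set.mem_insert _ _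
        rcases this with h'' | h''
        · exact hne h''
        · exact hSQ h''.symm
      have h1 : (φ c1).1 = {lam Q, lam S} :=
        pair_eq_of_mem' (isPair_line _) (fun e => hSx e.symm)
          (hlam Q c1 (mem_lineMk_left _ _ _)) (hlam S c1 (mem_lineMk_right _ _ _))
      have h2 : (φ c2).1 = {lam Q, lam S} := by
        have := hlam R c2 (mem_lineMk_left _ _ _)
        rw [← hQR] at this
        exact pair_eq_of_mem' (isPair_line _) (fun e => hSx e.symm) this
          (hlam S c2 (mem_lineMk_right _ _ _))
      exact hc12 (φ.injective (Subtype.ext (h1.trans h2.symm)))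
    -- the pair formula
    have hpair : ∀ (p q : P) (h : p ≠ q),
        (φ (lineMk p q h)).1 = {lam p, lam q} := fun p q h =>
      pair_eq_of_mem' (isPair_line _) (fun e => h (hinj e))
        (hlam p _ (mem_lineMk_left _ _ _)) (hlam q _ (mem_lineMk_right _ _ _))
    -- surjectivity
    have hsurj : Function.Surjective lam := by
      intro x'
      have hne : x' ≠ v' 0 +ᵥ x' := by
        intro h
        apply hv0
        have : v' 0 +ᵥ x' = (0 : V') +ᵥ x' := by rw [zero_vadd]; exact h.symm
        exact vadd_right_cancel _ this
      set a : PLine (ZMod 2) V P := φ.symm (lineMk x' (v' 0 +ᵥ x') hne) with hadef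
      obtain ⟨p, q, hpq, hpa⟩ := line_pair a
      have haeq : a = lineMk p q hpq := Subtype.ext hpa
      have h1 : (φ a).1 = {lam p, lam q} := by rw [haeq]; exact hpair p q hpq
      have hx'mem : x' ∈ (φ a).1 := by
        rw [hadef, Equiv.apply_symm_apply]
        exact mem_lineMk_left _ _ _
      rw [h1] at hx'mem
      rcases hx'mem with h | h
      · exact ⟨p, h.symm⟩
      · exact ⟨q, h.symm⟩
    refine ⟨lam, ⟨hinj, hsurj⟩, ?_, ?_⟩
    · intro a b _ Q hQ
      exact ⟨hlam Q a hQ.1, hlam Q b hQ.2⟩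
    · intro Q R S
      rw [collinear_z2, collinear_z2, hinj.eq_iff, hinj.eq_iff, hinj.eq_iff]
  · -- degenerate case: |P| ≤ 4, contradiction with dim A' ≥ 3
    exfalso
    have hfinP : Finite P := by
      by_contra hinf
      rw [not_finite_iff_infinite] at hinf
      have f := Infinite.natEmbedding P
      exact h5 ⟨fun i => f i.val, f.injective.comp Fin.val_injective⟩
    have : Fintype P := Fintype.ofFinite P
    have hcard : Fintype.card P ≤ 4 := by
      by_contra hc
      push_neg at hc
      obtain ⟨t, _, ht5⟩ := Finset.exists_subset_card_eq (s := (Finset.univ : Finset P)) (n := 5)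
        (by rw [Finset.card_univ]; omega)
      have e := t.equivFinOfCardEq ht5
      exact h5 ⟨fun i => (e.symm i : P), Subtype.val_injective.comp e.symm.injective⟩
    have hlinesP : Nat.card (PLine (ZMod 2) V P) ≤ 16 := by
      have h1 : Nat.card (PLine (ZMod 2) V P) ≤ Nat.card (Set P) :=
        Nat.card_le_card_of_injective _ Subtype.val_injective
      have h2 : Nat.card (Set P) = 2 ^ Fintype.card P := by
        rw [Nat.card_eq_fintype_card, Fintype.card_set]
      have h3 : (2 : ℕ) ^ Fintype.card P ≤ 2 ^ 4 := Nat.pow_le_pow_right (by norm_num) hcard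
      omega
    -- now build 28 distinct lines in P'
    set g : Fin 8 → (Fin 3 → ZMod 2) :=
      ![![0,0,0], ![0,0,1], ![0,1,0], ![0,1,1], ![1,0,0], ![1,0,1], ![1,1,0], ![1,1,1]]
      with hgdef
    have hg : Function.Injective g := by decide
    set c : (Fin 3 → ZMod 2) → V' := fun w => ∑ i, w i • v' i with hcdef
    have hc : Function.Injective c := by
      intro w w' h
      have hsum : ∑ i, (w i - w' i) • v' i = 0 := by
        simp only [hcdef] at h
        have : (∑ i, w i • v' i) - ∑ i, w' i • v' i = 0 := by rw [h]; simp
        rw [← Finset.sum_sub_distrib] at this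
        simpa [sub_smul] using this
      have hz := Fintype.linearIndependent_iff.mp hv' (fun i => w i - w' i) hsum
      funext i
      exact sub_eq_zero.mp (hz i)
    have hp0 : Nonempty P' := inferInstance
    obtain ⟨p0⟩ := hp0
    set Pt : Fin 8 → P' := fun n => c (g n) +ᵥ p0 with hPtdef
    have hPt : Function.Injective Pt := fun a b h => hg (hc (vadd_right_cancel p0 h))
    set T := {p : Fin 8 × Fin 8 // p.1 < p.2} with hTdef
    set F : T → PLine (ZMod 2) V' P' :=
      fun p => lineMk (Pt p.1.1) (Pt p.1.2) (fun h => (ne_of_lt p.2) (hPt h)) with hFdef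
    have hF : Function.Injective F := by
      intro p q h
      have h' : ({Pt p.1.1, Pt p.1.2} : Set P') = {Pt q.1.1, Pt q.1.2} :=
        congrArg Subtype.val h
      rw [Set.pair_eq_pair_iff] at h'
      rcases h' with ⟨h1, h2⟩ | ⟨h1, h2⟩
      · exact Subtype.ext (Prod.ext (hPt h1) (hPt h2))
      · exfalso
        have e1 := hPt h1
        have e2 := hPt h2
        have hp2 := p.2
        have hq2 := q.2
        rw [e1, e2] at hp2
        exact absurd hq2 (not_lt_of_gt hp2)
    have : Finite (PLine (ZMod 2) V' P') := Finite.of_equiv _ φ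
    have h28 : Nat.card T ≤ Nat.card (PLine (ZMod 2) V' P') :=
      Nat.card_le_card_of_injective F hF
    have hTcard : Nat.card T = 28 := by
      rw [Nat.card_eq_fintype_card]
      decide
    have hcong : Nat.card (PLine (ZMod 2) V' P') = Nat.card (PLine (ZMod 2) V P) :=
      Nat.card_congr φ.symm
    omega
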